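/- For a Poisson random variable Q with mean μ > 0 and integers a ≥ 1, r ≥ 1: E[1/(Q+a)^r] = (1/μ^a)(S_a^{(r)} (1 - e^{-μ}) + Σ_{k=1}^{r-1} S_a^{(r-k)} μ_{-k} + Σ_{k=1}^{a-1} S_{a-k,k}^{(r)} μ^k), where μ_{-k} = Σ_{j=1}^∞ e^{-μ} μ^j/(j! j^k), S_a^{(r)} are the Stirling numbers of the first kind, and S_{n,l}^{(k)} are the non-central Stirling numbers of the first kind. -/

import Mathlib

/-- The non-central Stirling numbers of the first kind `S_{n,l}^{(j)}`, defined as the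
coefficient of `x^j` in `x ∏_{k=l+1}^{n-1+l} (x - k)`.  For `l = 0` these are the ordinary
Stirling numbers of the first kind. -/
noncomputable def ncStirling (n l j : ℕ) : ℝ :=
  (Polynomial.X * ∏ k ∈ Finset.Ico (l + 1) (n + l),
      (Polynomial.X - Polynomial.C (k : ℝ))).coeff j

open Polynomial Finset

noncomputable def Qp (n l : ℕ) : Polynomial ℝ :=
  Polynomial.X * ∏ k ∈ Finset.Ico (l + 1) (n + l), (Polynomial.X - Polynomial.C (k : ℝ))

lemma Qp_one (l : ℕ) : Qp 1 l = X := by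
  unfold Qp
  rw [show 1 + l = l + 1 from by omega]
  simp

lemma Qp_succ (n l : ℕ) (hn : 1 ≤ n) :
    Qp (n + 1) l = (X - C ((l + 1 : ℕ) : ℝ)) * Qp n (l + 1) := by
  unfold Qp
  rw [Finset.prod_eq_prod_Ico_succ_bot (by omega : l + 1 < n + 1 + l)]
  rw [show n + (l + 1) = n + 1 + l from by omega]
  ring

lemma coeff_X_sub_C_mul (c : ℝ) (p : Polynomial ℝ) (j : ℕ) :
    ((X - C c) * p).coeff j = (if j = 0 then 0 else p.coeff (j - 1)) - c * p.coeff j := by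
  rw [sub_mul, Polynomial.coeff_sub, Polynomial.coeff_C_mul]
  cases j with
  | zero => simp [Polynomial.mul_coeff_zero]
  | succ j => simp [Polynomial.coeff_X_mul]

lemma key (r : ℕ) (hr : 1 ≤ r) : ∀ n, 1 ≤ n → ∀ l,
    Qp n l = (∑ j ∈ range (r + 1), C ((Qp n l).coeff j) * X ^ j)
      + X ^ r * ∑ k ∈ Icc (l + 1) (n + l - 1), C ((Qp (n + l - k) k).coeff r) * Qp (k - l) l := by
  intro n
  induction n with
  | zero => omega
  | succ n ih =>
    intro _ l
    rcases Nat.eq_zero_or_pos n with hn | hn1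
    · -- base case n + 1 = 1
      subst hn
      rw [Finset.Icc_eq_empty (by omega), Finset.sum_empty, mul_zero, add_zero, Qp_one]
      have h1 : ∀ j ∈ range (r + 1), C ((X : Polynomial ℝ).coeff j) * X ^ j
          = if j = 1 then X else 0 := by
        intro j _
        rcases eq_or_ne j 1 with h | h
        · simp [h]
        · simp [Polynomial.coeff_X, h, Ne.symm h]
      rw [Finset.sum_congr rfl h1, Finset.sum_ite_eq' (range (r + 1)) 1 (fun _ => (X : Polynomial ℝ))]
      simp only [Finset.mem_range, Nat.lt_succ_iff]
      rw [if_pos hr]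
    · -- inductive step
      have IH := ih hn1 (l + 1)
      set c : ℝ := ((l + 1 : ℕ) : ℝ) with hc
      set q : Polynomial ℝ := Qp n (l + 1) with hqdef
      have hQ : Qp (n + 1) l = (X - C c) * q := Qp_succ n l hn1
      have claim1 : (X - C c) * (∑ j ∈ range (r + 1), C (q.coeff j) * X ^ j)
          = (∑ j ∈ range (r + 1), C ((Qp (n + 1) l).coeff j) * X ^ j)
            + C (q.coeff r) * X ^ (r + 1) := by
        have h1 : ∀ j ∈ range (r + 1), C ((Qp (n + 1) l).coeff j) * X ^ j
            = (C (if j = 0 then 0 else q.coeff (j - 1))) * X ^ j - C c * (C (q.coeff j) * X ^ j) := by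
          intro j _
          rw [hQ, coeff_X_sub_C_mul, Polynomial.C_sub, Polynomial.C_mul]
          ring
        rw [Finset.sum_congr rfl h1, Finset.sum_sub_distrib]
        rw [Finset.sum_range_succ' (fun j => (C (if j = 0 then 0 else q.coeff (j - 1))) * X ^ j) r]
        simp only [Nat.add_sub_cancel, Nat.succ_ne_zero, if_neg, if_pos, map_zero, zero_mul,
          add_zero, if_false, if_true, reduceIte]
        rw [sub_mul, Finset.mul_sum]
        rw [Finset.sum_range_succ (fun i => X * (C (q.coeff i) * X ^ i))]
        have h2 : ∀ i : ℕ, X * (C (q.coeff i) * X ^ i) = C (q.coeff i) * X ^ (i + 1) := by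
          intro i; ring
        simp only [h2]
        rw [← Finset.mul_sum]
        ring
      have claim2 : X ^ r * (∑ k ∈ Icc (l + 1) (n + 1 + l - 1), C ((Qp (n + 1 + l - k) k).coeff r) * Qp (k - l) l)
          = C (q.coeff r) * X ^ (r + 1)
            + X ^ r * ((X - C c) * ∑ k ∈ Icc ((l + 1) + 1) (n + (l + 1) - 1),
                C ((Qp (n + (l + 1) - k) k).coeff r) * Qp (k - (l + 1)) (l + 1)) := by
        have hIcc : Icc (l + 1) (n + 1 + l - 1) = Ico (l + 1) (n + l + 1) := by
          rw [← Finset.Ico_add_one_right_eq_Icc]; congr 1; omega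
        rw [hIcc, Finset.sum_eq_sum_Ico_succ_bot (by omega : l + 1 < n + l + 1)]
        rw [show n + 1 + l - (l + 1) = n from by omega, show l + 1 - l = 1 from by omega, Qp_one]
        have hIcc2 : Ico (l + 1 + 1) (n + l + 1) = Icc ((l + 1) + 1) (n + (l + 1) - 1) := by
          rw [← Finset.Ico_add_one_right_eq_Icc]
          rfl
        rw [hIcc2]
        have h3 : ∀ k ∈ Icc ((l + 1) + 1) (n + (l + 1) - 1),
            C ((Qp (n + 1 + l - k) k).coeff r) * Qp (k - l) l
              = (X - C c) * (C ((Qp (n + (l + 1) - k) k).coeff r) * Qp (k - (l + 1)) (l + 1)) := by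
          intro k hk
          have hk' : l + 2 ≤ k ∧ k ≤ n + l := by
            simp only [Finset.mem_Icc] at hk; omega
          have e1 : n + 1 + l - k = n + (l + 1) - k := by omega
          have e2 : Qp (k - l) l = (X - C c) * Qp (k - (l + 1)) (l + 1) := by
            have e3 : k - l = (k - (l + 1)) + 1 := by omega
            rw [e3, Qp_succ _ _ (by omega)]
          rw [e1, e2]
          ring
        rw [Finset.sum_congr rfl h3, ← Finset.mul_sum]
        ring
      conv_lhs => rw [hQ, IH]
      rw [claim2, mul_add, claim1]
      ring

lemma ncStirling_eq (n l j : ℕ) : ncStirling n l j = (Qp n l).coeff j := rfl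

noncomputable def FFr (k m : ℕ) : ℝ := (m : ℝ) * ∏ j ∈ Finset.Ico 1 k, ((m : ℝ) - (j : ℝ))

lemma eval_Qp (n l : ℕ) (x : ℝ) :
    (Qp n l).eval x = x * ∏ k ∈ Ico (l + 1) (n + l), (x - (k : ℝ)) := by
  simp [Qp, Polynomial.eval_prod]

lemma key_eval (a r : ℕ) (ha : 1 ≤ a) (hr : 1 ≤ r) (m : ℕ) :
    FFr a m = (∑ j ∈ range (r + 1), ncStirling a 0 j * (m : ℝ) ^ j)
      + (m : ℝ) ^ r * ∑ k ∈ Icc 1 (a - 1), ncStirling (a - k) k r * FFr k m := by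
  have h := congrArg (Polynomial.eval (m : ℝ)) (key r hr a ha 0)
  simp only [Polynomial.eval_add, Polynomial.eval_mul, Polynomial.eval_pow,
    Polynomial.eval_finset_sum, Polynomial.eval_C, Polynomial.eval_X, eval_Qp] at h
  simp only [FFr, ncStirling_eq]
  simp only [zero_add, add_zero, Nat.sub_zero] at h
  convert h using 3

lemma fact_ratio (t k : ℕ) :
    (((t + k).factorial : ℝ)) = (t.factorial : ℝ) * ∏ j ∈ Finset.range k, ((t : ℝ) + j + 1) := by
  induction k with
  | zero => simp
  | succ k ih =>
    rw [show t + (k + 1) = (t + k) + 1 from rfl, Nat.factorial_succ, Finset.prod_range_succ,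
      Nat.cast_mul, ih]
    push_cast
    ring

lemma ff_desc (t k : ℕ) (hk : 1 ≤ k) :
    FFr k (t + k) = ((t + k).factorial : ℝ) / (t.factorial : ℝ) := by
  unfold FFr
  have h0 : (((t + k : ℕ)) : ℝ) * ∏ j ∈ Finset.Ico 1 k, ((((t + k : ℕ)) : ℝ) - j)
      = ∏ j ∈ Finset.range k, ((((t + k : ℕ)) : ℝ) - j) := by
    rw [Finset.range_eq_Ico, Finset.prod_eq_prod_Ico_succ_bot (by omega : 0 < k)]
    simp
  rw [h0]
  have h1 : ∏ j ∈ Finset.range k, ((((t + k : ℕ)) : ℝ) - j)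
      = ∏ j ∈ Finset.range k, ((t : ℝ) + j + 1) := by
    rw [← Finset.prod_range_reflect (fun j => (t : ℝ) + j + 1) k]
    apply Finset.prod_congr rfl
    intro j hj
    have hj' : j < k := Finset.mem_range.mp hj
    have h2 : ((k - 1 - j : ℕ) : ℝ) = (k : ℝ) - 1 - j := by
      rw [show k - 1 - j = k - (1 + j) from by omega, Nat.cast_sub (by omega)]
      push_cast
      ring
    rw [h2]
    push_cast
    ring
  rw [h1, fact_ratio]
  have : (t.factorial : ℝ) ≠ 0 := Nat.cast_ne_zero.mpr (Nat.factorial_ne_zero t)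
  field_simp

lemma ff_zero (m k : ℕ) (hm : m < k) : FFr k m = 0 := by
  unfold FFr
  rcases Nat.eq_zero_or_pos m with h | h
  · simp [h]
  · rw [Finset.prod_eq_zero (Finset.mem_Ico.mpr ⟨h, hm⟩) (by simp)]
    ring

lemma ncStirling_zero (a : ℕ) : ncStirling a 0 0 = 0 := by
  rw [ncStirling_eq, Qp, Polynomial.mul_coeff_zero, Polynomial.coeff_X_zero, zero_mul]

/-- Closed form for the inverse moments of a Poisson variate about `-a` in terms of
central and non-central Stirling numbers of the first kind. -/
theorem poisson_inv_moment_stirling (μ : ℝ) (hμ : 0 < μ) (a r : ℕ)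
    (ha : 1 ≤ a) (hr : 1 ≤ r) :
    ∑' k : ℕ, Real.exp (-μ) * μ ^ k / ((k.factorial : ℝ) * ((k : ℝ) + (a : ℝ)) ^ r) =
      (1 / μ ^ a) *
        (ncStirling a 0 r * (1 - Real.exp (-μ)) +
          (∑ k ∈ Finset.Icc 1 (r - 1), ncStirling a 0 (r - k) *
            ∑' i : ℕ, Real.exp (-μ) * μ ^ (i + 1) /
              (((i + 1).factorial : ℝ) * ((i : ℝ) + 1) ^ k)) +
          ∑ k ∈ Finset.Icc 1 (a - 1), ncStirling (a - k) k r * μ ^ k) := by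
  classical
  set E := Real.exp (-μ) with hE
  have hEpos : 0 < E := Real.exp_pos _
  have hsum_exp : Summable (fun n : ℕ => μ ^ n / (n.factorial : ℝ)) :=
    Real.summable_pow_div_factorial μ
  have hexp : ∑' n : ℕ, μ ^ n / (n.factorial : ℝ) = Real.exp μ := by
    rw [Real.exp_eq_exp_ℝ, NormedSpace.exp_eq_tsum_div]
  have hfact : ∀ m : ℕ, ((m.factorial : ℝ)) ≠ 0 :=
    fun m => Nat.cast_ne_zero.mpr (Nat.factorial_ne_zero m)
  have hm1 : ∀ i : ℕ, (0 : ℝ) < (i : ℝ) + 1 := fun i => by positivity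
  -- summability of the f-pieces
  have hsum1 : ∀ k : ℕ,
      Summable (fun i : ℕ => E * μ ^ (i + 1) / (((i + 1).factorial : ℝ) * ((i : ℝ) + 1) ^ k)) := by
    intro k
    have hbase : Summable (fun i : ℕ => E * (μ ^ (i + 1) / ((i + 1).factorial : ℝ))) :=
      ((summable_nat_add_iff 1).mpr hsum_exp).mul_left E
    apply Summable.of_nonneg_of_le (fun i => by positivity) _ hbase
    intro i
    rw [mul_div_assoc]
    apply mul_le_mul_of_nonneg_left _ hEpos.le
    have h1 : (1 : ℝ) ≤ ((i : ℝ) + 1) ^ k := one_le_pow₀ (by linarith [Nat.cast_nonneg (α := ℝ) i])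
    have hf : (0 : ℝ) < ((i + 1).factorial : ℝ) := Nat.cast_pos.mpr (i + 1).factorial_pos
    exact div_le_div_of_nonneg_left (by positivity) hf (by nlinarith)
  -- T 0 = 1 - E
  have hT0 : (∑' i : ℕ, E * μ ^ (i + 1) / (((i + 1).factorial : ℝ) * ((i : ℝ) + 1) ^ 0))
      = 1 - E := by
    simp only [pow_zero, mul_one, mul_div_assoc]
    rw [tsum_mul_left]
    have h2 : Real.exp μ = μ ^ 0 / (Nat.factorial 0 : ℝ) + ∑' i : ℕ, μ ^ (i + 1) / ((i + 1).factorial : ℝ) := by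
      rw [← hexp]
      exact Summable.tsum_eq_zero_add hsum_exp
    have h3 : ∑' i : ℕ, μ ^ (i + 1) / ((i + 1).factorial : ℝ) = Real.exp μ - 1 := by
      simp only [pow_zero, Nat.factorial_zero, Nat.cast_one, div_one] at h2
      linarith
    rw [h3, hE, mul_sub, ← Real.exp_add]
    simp
  -- h-pieces: summability and value
  have hH : ∀ k : ℕ, 1 ≤ k →
      Summable (fun i : ℕ => E * μ ^ (i + 1) * FFr k (i + 1) / ((i + 1).factorial : ℝ)) ∧
      (∑' i : ℕ, E * μ ^ (i + 1) * FFr k (i + 1) / ((i + 1).factorial : ℝ)) = μ ^ k := by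
    intro k hk
    have hcomp : ∀ t : ℕ,
        E * μ ^ (t + (k - 1) + 1) * FFr k (t + (k - 1) + 1) / ((t + (k - 1) + 1).factorial : ℝ)
          = (E * μ ^ k) * (μ ^ t / (t.factorial : ℝ)) := by
      intro t
      have h1 : t + (k - 1) + 1 = t + k := by omega
      rw [h1, ff_desc t k hk]
      rw [pow_add]
      field_simp
    have hinj : Function.Injective (fun t : ℕ => t + (k - 1)) := fun x y h => by
      simpa using h
    have hsupp : ∀ i : ℕ, i ∉ Set.range (fun t : ℕ => t + (k - 1)) →
        E * μ ^ (i + 1) * FFr k (i + 1) / ((i + 1).factorial : ℝ) = 0 := by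
      intro i hi
      have h2 : i + 1 < k := by
        by_contra h
        push_neg at h
        exact hi ⟨i - (k - 1), show i - (k - 1) + (k - 1) = i by omega⟩
      rw [ff_zero _ _ h2, mul_zero, zero_div]
    have hbsum : Summable (fun t : ℕ => (E * μ ^ k) * (μ ^ t / (t.factorial : ℝ))) :=
      hsum_exp.mul_left _
    have hcompsum : Summable ((fun i : ℕ => E * μ ^ (i + 1) * FFr k (i + 1) / ((i + 1).factorial : ℝ))
        ∘ (fun t : ℕ => t + (k - 1))) := by
      have : ((fun i : ℕ => E * μ ^ (i + 1) * FFr k (i + 1) / ((i + 1).factorial : ℝ))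
          ∘ (fun t : ℕ => t + (k - 1))) = fun t : ℕ => (E * μ ^ k) * (μ ^ t / (t.factorial : ℝ)) :=
        funext fun t => hcomp t
      rw [this]
      exact hbsum
    constructor
    · exact (hinj.summable_iff hsupp).mp hcompsum
    · have hs : Function.support (fun i : ℕ => E * μ ^ (i + 1) * FFr k (i + 1) / ((i + 1).factorial : ℝ))
          ⊆ Set.range (fun t : ℕ => t + (k - 1)) := by
        intro i hi
        by_contra h
        exact hi (hsupp i h)
      rw [← hinj.tsum_eq hs, tsum_congr hcomp, tsum_mul_left, hexp, hE]
      have hx : Real.exp (-μ) * Real.exp μ = 1 := by rw [← Real.exp_add]; simp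
      linear_combination (μ ^ k) * hx
  -- Step 1: reindex the sum
  have hstep1 : μ ^ a * (∑' k : ℕ, E * μ ^ k / ((k.factorial : ℝ) * ((k : ℝ) + (a : ℝ)) ^ r))
      = ∑' i : ℕ, E * μ ^ (i + 1) * FFr a (i + 1)
          / (((i + 1).factorial : ℝ) * ((i : ℝ) + 1) ^ r) := by
    rw [← tsum_mul_left]
    have hptw : ∀ k : ℕ, μ ^ a * (E * μ ^ k / ((k.factorial : ℝ) * ((k : ℝ) + (a : ℝ)) ^ r))
        = E * μ ^ (k + (a - 1) + 1) * FFr a (k + (a - 1) + 1)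
            / (((k + (a - 1) + 1).factorial : ℝ) * (((k + (a - 1) : ℕ) : ℝ) + 1) ^ r) := by
      intro k
      have h1 : k + (a - 1) + 1 = k + a := by omega
      rw [h1, ff_desc k a ha]
      have h2 : (((k + (a - 1) : ℕ)) : ℝ) + 1 = (k : ℝ) + (a : ℝ) := by
        have h2' : ((a - 1 : ℕ) : ℝ) = (a : ℝ) - 1 := by
          rw [Nat.cast_sub ha]; simp
        push_cast [h2']; ring
      rw [h2]
      have hka : (0 : ℝ) < (k : ℝ) + (a : ℝ) := by positivity
      have h3 : ((k + a).factorial : ℝ) ≠ 0 := hfact _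
      have h4 : ((k.factorial : ℝ)) ≠ 0 := hfact _
      have h5 : ((k : ℝ) + (a : ℝ)) ^ r ≠ 0 := by positivity
      rw [pow_add μ k a]
      field_simp
    rw [tsum_congr hptw]
    have hinj : Function.Injective (fun t : ℕ => t + (a - 1)) := fun x y h => by simpa using h
    have hsupp : ∀ i : ℕ, i ∉ Set.range (fun t : ℕ => t + (a - 1)) →
        E * μ ^ (i + 1) * FFr a (i + 1) / (((i + 1).factorial : ℝ) * ((i : ℝ) + 1) ^ r) = 0 := by
      intro i hi
      have h2 : i + 1 < a := by
        by_contra h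
        push_neg at h
        exact hi ⟨i - (a - 1), show i - (a - 1) + (a - 1) = i by omega⟩
      rw [ff_zero _ _ h2, mul_zero, zero_div]
    have hs : Function.support (fun i : ℕ => E * μ ^ (i + 1) * FFr a (i + 1)
        / (((i + 1).factorial : ℝ) * ((i : ℝ) + 1) ^ r)) ⊆ Set.range (fun t : ℕ => t + (a - 1)) := by
      intro i hi
      by_contra h
      exact hi (hsupp i h)
    exact hinj.tsum_eq hs
  -- Step 2: pointwise split
  have hptw2 : ∀ i : ℕ,
      E * μ ^ (i + 1) * FFr a (i + 1) / (((i + 1).factorial : ℝ) * ((i : ℝ) + 1) ^ r)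
        = (∑ j ∈ range (r + 1), ncStirling a 0 j *
              (E * μ ^ (i + 1) / (((i + 1).factorial : ℝ) * ((i : ℝ) + 1) ^ (r - j))))
          + ∑ k ∈ Icc 1 (a - 1), ncStirling (a - k) k r *
              (E * μ ^ (i + 1) * FFr k (i + 1) / ((i + 1).factorial : ℝ)) := by
    intro i
    have hc : ((i : ℝ) + 1) = (((i + 1 : ℕ)) : ℝ) := by push_cast; ring
    rw [hc, key_eval a r ha hr (i + 1)]
    rw [mul_add, add_div]
    have hm0 : (0 : ℝ) < (((i + 1 : ℕ)) : ℝ) := by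
      exact_mod_cast Nat.succ_pos i
    congr 1
    · rw [Finset.mul_sum, Finset.sum_div]
      apply Finset.sum_congr rfl
      intro j hj
      have hjr : j ≤ r := by
        have := Finset.mem_range.mp hj; omega
      have hsplit : (((i + 1 : ℕ)) : ℝ) ^ r
          = (((i + 1 : ℕ)) : ℝ) ^ j * (((i + 1 : ℕ)) : ℝ) ^ (r - j) := by
        rw [← pow_add]; congr 1; omega
      rw [hsplit]
      have e1 : (((i + 1 : ℕ)) : ℝ) ^ j ≠ 0 := by positivity
      have e2 : (((i + 1 : ℕ)) : ℝ) ^ (r - j) ≠ 0 := by positivity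
      field_simp
    · rw [show E * μ ^ (i + 1) * ((((i + 1 : ℕ)) : ℝ) ^ r *
          ∑ k ∈ Icc 1 (a - 1), ncStirling (a - k) k r * FFr k (i + 1))
          = (((i + 1 : ℕ)) : ℝ) ^ r *
            (E * μ ^ (i + 1) * ∑ k ∈ Icc 1 (a - 1), ncStirling (a - k) k r * FFr k (i + 1))
          from by ring]
      rw [Finset.mul_sum, Finset.mul_sum, Finset.sum_div]
      apply Finset.sum_congr rfl
      intro k hk
      have e3 : (((i + 1 : ℕ)) : ℝ) ^ r ≠ 0 := by positivity
      field_simp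
  -- summability of the pieces
  have hsum_f : ∀ j ∈ range (r + 1), Summable (fun i : ℕ => ncStirling a 0 j *
      (E * μ ^ (i + 1) / (((i + 1).factorial : ℝ) * ((i : ℝ) + 1) ^ (r - j)))) :=
    fun j _ => (hsum1 (r - j)).mul_left _
  have hsum_h : ∀ k ∈ Icc 1 (a - 1), Summable (fun i : ℕ => ncStirling (a - k) k r *
      (E * μ ^ (i + 1) * FFr k (i + 1) / ((i + 1).factorial : ℝ))) := by
    intro k hk
    exact ((hH k (Finset.mem_Icc.mp hk).1).1).mul_left _
  -- Step 3: split the tsum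
  have hstep3 : (∑' i : ℕ, E * μ ^ (i + 1) * FFr a (i + 1)
        / (((i + 1).factorial : ℝ) * ((i : ℝ) + 1) ^ r))
      = (∑ j ∈ range (r + 1), ncStirling a 0 j *
            ∑' i : ℕ, E * μ ^ (i + 1) / (((i + 1).factorial : ℝ) * ((i : ℝ) + 1) ^ (r - j)))
        + ∑ k ∈ Icc 1 (a - 1), ncStirling (a - k) k r *
            ∑' i : ℕ, E * μ ^ (i + 1) * FFr k (i + 1) / ((i + 1).factorial : ℝ) := by
    rw [tsum_congr hptw2, Summable.tsum_add (summable_sum hsum_f) (summable_sum hsum_h),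
      Summable.tsum_finsetSum hsum_f, Summable.tsum_finsetSum hsum_h]
    congr 1
    · exact Finset.sum_congr rfl fun j _ => by rw [tsum_mul_left]
    · exact Finset.sum_congr rfl fun k _ => by rw [tsum_mul_left]
  -- evaluate the f-part
  have hFsum : (∑ j ∈ range (r + 1), ncStirling a 0 j *
        ∑' i : ℕ, E * μ ^ (i + 1) / (((i + 1).factorial : ℝ) * ((i : ℝ) + 1) ^ (r - j)))
      = ncStirling a 0 r * (1 - E)
        + ∑ k ∈ Finset.Icc 1 (r - 1), ncStirling a 0 (r - k) *
            ∑' i : ℕ, E * μ ^ (i + 1) / (((i + 1).factorial : ℝ) * ((i : ℝ) + 1) ^ k) := by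
    rw [Finset.sum_range_succ, Nat.sub_self, hT0]
    rw [Finset.range_eq_Ico, Finset.sum_eq_sum_Ico_succ_bot (show 0 < r by omega)]
    rw [ncStirling_zero, zero_mul, zero_add]
    have hIcc : Finset.Ico 1 r = Finset.Icc 1 (r - 1) := by
      rw [← Finset.Ico_add_one_right_eq_Icc]; congr 1; omega
    rw [hIcc]
    rw [add_comm]
    congr 1
    refine Finset.sum_nbij' (fun j => r - j) (fun k => r - k) ?_ ?_ ?_ ?_ ?_
    · intro j hj
      simp only [Finset.mem_Icc] at hj ⊢
      omega
    · intro k hk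
      simp only [Finset.mem_Icc] at hk ⊢
      omega
    · intro j hj
      simp only [Finset.mem_Icc] at hj
      show r - (r - j) = j
      omega
    · intro k hk
      simp only [Finset.mem_Icc] at hk
      show r - (r - k) = k
      omega
    · intro j hj
      simp only [Finset.mem_Icc] at hj
      rw [show r - (r - j) = j from by omega]
  -- evaluate the h-part
  have hHsum : (∑ k ∈ Icc 1 (a - 1), ncStirling (a - k) k r *
        ∑' i : ℕ, E * μ ^ (i + 1) * FFr k (i + 1) / ((i + 1).factorial : ℝ))
      = ∑ k ∈ Finset.Icc 1 (a - 1), ncStirling (a - k) k r * μ ^ k := by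
    apply Finset.sum_congr rfl
    intro k hk
    rw [(hH k (Finset.mem_Icc.mp hk).1).2]
  -- assemble
  have main : μ ^ a * (∑' k : ℕ, E * μ ^ k / ((k.factorial : ℝ) * ((k : ℝ) + (a : ℝ)) ^ r))
      = ncStirling a 0 r * (1 - E)
        + (∑ k ∈ Finset.Icc 1 (r - 1), ncStirling a 0 (r - k) *
            ∑' i : ℕ, E * μ ^ (i + 1) / (((i + 1).factorial : ℝ) * ((i : ℝ) + 1) ^ k))
        + ∑ k ∈ Finset.Icc 1 (a - 1), ncStirling (a - k) k r * μ ^ k := by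
    rw [hstep1, hstep3, hFsum, hHsum]
  have hμa : μ ^ a ≠ 0 := by positivity
  rw [← main, one_div, inv_mul_cancel_left₀ hμa]
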